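/- arXiv:0804.3784 — 2 statements merged into one kernel-verified Lean document; each statement's English description precedes it below -/
import Mathlib

section
/- With t, t_r, C_0, C_r as above, every closed disc centered at a point of C_0 that is contained in the tile t contains the point (2a,0), and every closed disc centered at a point of C_r that is contained in t ∪ t_r contains the point (2a,0). -/
open Metric

noncomputable abbrev pt (x y : ℝ) : EuclideanSpace ℝ (Fin 2) := WithLp.toLp 2 ![x, y]

/-- The tile `t = [−5a,5a]²`. -/
def tileT (a : ℝ) : Set (EuclideanSpace ℝ (Fin 2)) :=
  {p | p 0 ∈ Set.Icc (-(5*a)) (5*a) ∧ p 1 ∈ Set.Icc (-(5*a)) (5*a)}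

/-- The right neighbouring tile `t_r = [5a,15a] × [−5a,5a]`. -/
def tileTr (a : ℝ) : Set (EuclideanSpace ℝ (Fin 2)) :=
  {p | p 0 ∈ Set.Icc (5*a) (15*a) ∧ p 1 ∈ Set.Icc (-(5*a)) (5*a)}

lemma coord_le (x y : EuclideanSpace ℝ (Fin 2)) (i : Fin 2) : |x i - y i| ≤ dist x y := by
  rw [EuclideanSpace.dist_eq, ← Real.sqrt_sq_eq_abs]
  apply Real.sqrt_le_sqrt
  have := Finset.single_le_sum (f := fun j => dist (x j) (y j) ^ 2)
    (fun j _ => sq_nonneg _) (Finset.mem_univ i)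
  simpa [Real.dist_eq, sq_abs] using this

lemma dist_pt (x1 y1 x2 y2 : ℝ) :
    dist (pt x1 y1) (pt x2 y2) = Real.sqrt ((x1-x2)^2 + (y1-y2)^2) := by
  rw [EuclideanSpace.dist_eq]
  simp [Fin.sum_univ_two, Real.dist_eq, sq_abs, PiLp.toLp_apply]

/-- Every maximal closed disc centred at a point of `C_0` (the disc of radius
`a` about the origin) that stays inside the tile `t` contains the point `(2a,0)`, and every
maximal closed disc centred at a point of `C_r` (the disc of radius `a` about `(4a,0)`) that
stays inside `t ∪ t_r` contains `(2a,0)`.  The maximal disc centred at `p` inside a region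
`R` is the closed disc of radius `infDist p Rᶜ`. -/
theorem maximal_discs_contain_2a0 (a : ℝ) (ha : 0 < a) :
    (∀ p ∈ closedBall (pt 0 0) a,
        pt (2*a) 0 ∈ closedBall p (Metric.infDist p (tileT a)ᶜ)) ∧
    (∀ p ∈ closedBall (pt (4*a) 0) a,
        pt (2*a) 0 ∈ closedBall p (Metric.infDist p (tileT a ∪ tileTr a)ᶜ)) := by
  constructor
  · intro p hp
    rw [mem_closedBall] at hp ⊢
    have hne : ((tileT a)ᶜ).Nonempty := by
      refine ⟨pt (100*a) 0, ?_⟩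
      simp only [tileT, Set.mem_compl_iff, Set.mem_setOf_eq, Set.mem_Icc, pt, PiLp.toLp_apply,
        Matrix.cons_val_zero, Matrix.cons_val_one, Matrix.head_cons]
      intro h
      linarith [h.1.2]
    refine le_of_not_gt fun hlt => ?_
    obtain ⟨q, hqd, hq⟩ : ∃ y, dist p y < dist (pt (2*a) 0) p ∧ y ∈ (tileT a)ᶜ := by
      obtain ⟨y, hy, hyd⟩ := (Metric.infDist_lt_iff hne).mp hlt
      exact ⟨y, hyd, hy⟩
    have h0 := abs_le.mp ((coord_le p (pt 0 0) 0).trans hp)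
    have h1 := abs_le.mp ((coord_le p (pt 0 0) 1).trans hp)
    simp only [pt, PiLp.toLp_apply, Matrix.cons_val_zero, Matrix.cons_val_one, Matrix.head_cons, sub_zero] at h0 h1
    have hd : dist (pt (2*a) 0) p ≤ 3*a := by
      have := dist_triangle (pt (2*a) 0) (pt 0 0) p
      have h2 : dist (pt (2*a) 0) (pt 0 0) = 2*a := by
        rw [dist_pt]
        rw [show ((2*a-0)^2 + (0-(0:ℝ))^2) = (2*a)^2 by ring]
        rw [Real.sqrt_sq (by linarith)]
      rw [dist_comm (pt 0 0) p] at this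
      linarith
    have hc0 := abs_le.mp (coord_le p q 0)
    have hc1 := abs_le.mp (coord_le p q 1)
    simp only [tileT, Set.mem_compl_iff, Set.mem_setOf_eq, Set.mem_Icc] at hq
    push_neg at hq
    rcases lt_or_ge (q 0) (-(5*a)) with h | h
    · linarith [hc0.2]
    rcases lt_or_ge (5*a) (q 0) with h' | h'
    · linarith [hc0.1]
    rcases lt_or_ge (q 1) (-(5*a)) with h'' | h''
    · linarith [hc1.2]
    · linarith [hc1.1, hq ⟨h, h'⟩ h'']
  · intro p hp
    rw [mem_closedBall] at hp ⊢
    have hne : ((tileT a ∪ tileTr a)ᶜ).Nonempty := by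
      refine ⟨pt (100*a) 0, ?_⟩
      simp only [tileT, tileTr, Set.mem_compl_iff, Set.mem_union, Set.mem_setOf_eq, Set.mem_Icc,
        pt, PiLp.toLp_apply, Matrix.cons_val_zero, Matrix.cons_val_one, Matrix.head_cons]
      push_neg
      constructor
      · intro h; linarith
      · intro h; linarith
    refine le_of_not_gt fun hlt => ?_
    obtain ⟨q, hqd, hq⟩ : ∃ y, dist p y < dist (pt (2*a) 0) p ∧ y ∈ (tileT a ∪ tileTr a)ᶜ := by
      obtain ⟨y, hy, hyd⟩ := (Metric.infDist_lt_iff hne).mp hlt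
      exact ⟨y, hyd, hy⟩
    have h0 := abs_le.mp ((coord_le p (pt (4*a) 0) 0).trans hp)
    have h1 := abs_le.mp ((coord_le p (pt (4*a) 0) 1).trans hp)
    simp only [pt, PiLp.toLp_apply, Matrix.cons_val_zero, Matrix.cons_val_one, Matrix.head_cons, sub_zero] at h0 h1
    have hd : dist (pt (2*a) 0) p ≤ 3*a := by
      have := dist_triangle (pt (2*a) 0) (pt (4*a) 0) p
      have h2 : dist (pt (2*a) 0) (pt (4*a) 0) = 2*a := by
        rw [dist_pt]
        rw [show ((2*a-4*a)^2 + (0-(0:ℝ))^2) = (2*a)^2 by ring]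
        rw [Real.sqrt_sq (by linarith)]
      rw [dist_comm (pt (4*a) 0) p] at this
      linarith
    have hc0 := abs_le.mp (coord_le p q 0)
    have hc1 := abs_le.mp (coord_le p q 1)
    simp only [tileT, tileTr, Set.mem_compl_iff, Set.mem_union, Set.mem_setOf_eq,
      Set.mem_Icc] at hq
    push_neg at hq
    obtain ⟨hqT, hqTr⟩ := hq
    rcases lt_or_ge (q 1) (-(5*a)) with h | h
    · linarith [hc1.2]
    rcases lt_or_ge (5*a) (q 1) with h' | h'
    · linarith [hc1.1]
    rcases lt_or_ge (q 0) (-(5*a)) with hx | hx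
    · linarith [hc0.2]
    rcases lt_or_ge (15*a) (q 0) with hx' | hx'
    · linarith [hc0.1]
    rcases lt_or_ge (q 0) (5*a) with hz | hz
    · linarith [hqT ⟨hx, le_of_lt hz⟩ h]
    · linarith [hqTr ⟨hz, hx'⟩ h]
end

section
/- Let p be a point in the closed disc of radius a centered at (4a,0), and consider any closed disc D centered at p whose radius equals the distance from p to the boundary of [−5a,5a]^2 ∪ [5a,15a]×[−5a,5a]. Then D contains the closed disc of radius a centered at (6a,0) (the 'left disc' of the neighboring tile). -/
open Metric

lemma coord_dist_le (x y : EuclideanSpace ℝ (Fin 2)) (i : Fin 2) :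
    dist (x i) (y i) ≤ dist x y := by
  rw [EuclideanSpace.dist_eq]
  rw [show dist (x i) (y i) = √(dist (x i) (y i) ^ 2) from
    (Real.sqrt_sq dist_nonneg).symm]
  exact Real.sqrt_le_sqrt (Finset.single_le_sum
    (f := fun j => dist (x j) (y j) ^ 2) (fun j _ => sq_nonneg _) (Finset.mem_univ i))

lemma pt_dist (x₁ y₁ x₂ y₂ : ℝ) :
    dist (pt x₁ y₁) (pt x₂ y₂) = √((x₁ - x₂)^2 + (y₁ - y₂)^2) := by
  rw [EuclideanSpace.dist_eq, Fin.sum_univ_two]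
  simp [pt, Real.dist_eq, sq_abs]

/-- For `p` in the closed disc of radius `a` about `(4a,0)`, the closed disc
centred at `p` of radius equal to the distance from `p` to the boundary of `t ∪ t_r`
(i.e. `infDist p (t ∪ t_r)ᶜ`) contains the closed disc of radius `a` centred at `(6a,0)`,
the left disc of the neighbouring tile. -/
theorem maximal_disc_contains_left_disc_of_neighbour (a : ℝ) (ha : 0 < a)
    (p : EuclideanSpace ℝ (Fin 2)) (hp : p ∈ closedBall (pt (4*a) 0) a) :
    closedBall (pt (6*a) 0) a ⊆ closedBall p (Metric.infDist p (tileT a ∪ tileTr a)ᶜ) := by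
  have hpd : dist p (pt (4*a) 0) ≤ a := mem_closedBall.mp hp
  have hp0 : |p 0 - 4*a| ≤ a := by
    have := (coord_dist_le p (pt (4*a) 0) 0).trans hpd
    simpa [pt, Real.dist_eq] using this
  have hp1 : |p 1| ≤ a := by
    have := (coord_dist_le p (pt (4*a) 0) 1).trans hpd
    simpa [pt, Real.dist_eq] using this
  have hS : ((tileT a ∪ tileTr a)ᶜ).Nonempty := by
    refine ⟨pt (100*a) 0, ?_⟩
    simp only [Set.mem_compl_iff, Set.mem_union, tileT, tileTr, Set.mem_setOf_eq,
      Set.mem_Icc, pt, WithLp.ofLp_toLp, Matrix.cons_val_zero, Matrix.cons_val_one, Matrix.head_cons]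
    push_neg
    constructor <;> intro h <;> nlinarith
  have hinf : 4*a ≤ Metric.infDist p (tileT a ∪ tileTr a)ᶜ := by
    by_contra hcon
    push_neg at hcon
    obtain ⟨x, hx, hlt⟩ := (Metric.infDist_lt_iff hS).mp hcon
    refine absurd hlt (not_lt.mpr ?_)
    simp only [Set.mem_compl_iff, Set.mem_union, tileT, tileTr, Set.mem_setOf_eq,
      Set.mem_Icc] at hx
    push_neg at hx
    obtain ⟨h1, h2⟩ := hx
    have habs0 := abs_le.mp hp0
    have habs1 := abs_le.mp hp1
    by_cases hy : -(5*a) ≤ x 1 ∧ x 1 ≤ 5*a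
    · -- horizontal escape: x 0 < -5a or x 0 > 15a
      have hx0 : x 0 < -(5*a) ∨ 15*a < x 0 := by
        rcases lt_or_ge (x 0) (-(5*a)) with h | h
        · exact Or.inl h
        · rcases lt_or_ge (x 0) (5*a) with h' | h'
          · exact absurd (h1 ⟨h, le_of_lt h'⟩ hy.1) (not_lt.mpr hy.2)
          · exact Or.inr (by
              rcases lt_or_ge (15*a) (x 0) with h'' | h''
              · exact h''
              · exact absurd (h2 ⟨h', h''⟩ hy.1) (not_lt.mpr hy.2))
      have key : 4*a ≤ |p 0 - x 0| := by
        rcases hx0 with h | h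
        · have h4 : 4*a ≤ p 0 - x 0 := by nlinarith [habs0.1]
          exact h4.trans (le_abs_self _)
        · have : x 0 - p 0 ≥ 4*a := by nlinarith
          calc 4*a ≤ x 0 - p 0 := this
            _ ≤ |p 0 - x 0| := by rw [abs_sub_comm]; exact le_abs_self _
      calc 4*a ≤ |p 0 - x 0| := key
        _ = dist (p 0) (x 0) := (Real.dist_eq _ _).symm
        _ ≤ dist p x := coord_dist_le p x 0
    · push_neg at hy
      have key : 4*a ≤ |p 1 - x 1| := by
        rcases lt_or_ge (x 1) (-(5*a)) with h | h
        · have : p 1 - x 1 ≥ 4*a := by nlinarith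
          exact le_trans this (le_abs_self _)
        · have h5 : 5*a < x 1 := hy h
          have : x 1 - p 1 ≥ 4*a := by nlinarith
          calc 4*a ≤ x 1 - p 1 := this
            _ ≤ |p 1 - x 1| := by rw [abs_sub_comm]; exact le_abs_self _
      calc 4*a ≤ |p 1 - x 1| := key
        _ = dist (p 1) (x 1) := (Real.dist_eq _ _).symm
        _ ≤ dist p x := coord_dist_le p x 1
  intro q hq
  rw [mem_closedBall]
  have hqd : dist q (pt (6*a) 0) ≤ a := mem_closedBall.mp hq
  have hcc : dist (pt (6*a) 0) (pt (4*a) 0) = 2*a := by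
    rw [pt_dist]
    rw [show (6*a - 4*a)^2 + (0 - (0:ℝ))^2 = (2*a)^2 by ring]
    exact Real.sqrt_sq (by linarith)
  have : dist q p ≤ 4*a := by
    calc dist q p ≤ dist q (pt (6*a) 0) + dist (pt (6*a) 0) (pt (4*a) 0) + dist (pt (4*a) 0) p :=
          dist_triangle4 q _ _ p
      _ ≤ a + 2*a + a := by
          gcongr
          · rw [hcc]
          · rw [dist_comm]; exact hpd
      _ = 4*a := by ring
  exact this.trans hinf
end
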